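/- For all nonzero integers m and all positive integers n, the sum over k from 1 to n of m^k * ((m-108)k^3 - 54k^2 + 12k + 6) / ((2k+1)(3k+1) * k^3 * C(2k,k)^2 * C(3k,k)) equals m^{n+1} / ((2n+1)(3n+1) * C(2n,n)^2 * C(3n,n)) - m. -/
import Mathlib

lemma chooseA (n : ℕ) : ((n:ℚ)+1) * ((2*(n+1)).choose (n+1) : ℚ) = 2*(2*n+1) * ((2*n).choose n : ℚ) := by
  have h1 : (n+1) ≤ 2*(n+1) := by omega
  have h2 : n ≤ 2*n := by omega
  rw [Nat.cast_choose ℚ h1, Nat.cast_choose ℚ h2]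
  have e1 : 2*(n+1) - (n+1) = n+1 := by omega
  have e2 : 2*n - n = n := by omega
  rw [e1, e2]
  have e3 : 2*(n+1) = (2*n+1)+1 := by omega
  rw [e3]
  rw [Nat.factorial_succ, Nat.factorial_succ, Nat.factorial_succ]
  have f1 : (0:ℚ) < (Nat.factorial n) := by exact_mod_cast Nat.factorial_pos n
  have f2 : (0:ℚ) < (Nat.factorial (2*n)) := by exact_mod_cast Nat.factorial_pos (2*n)
  push_cast
  field_simp
  ring

lemma chooseB (n : ℕ) : (2*(n:ℚ)+2)*(2*(n:ℚ)+1) * ((3*(n+1)).choose (n+1) : ℚ) = 3*(3*(n:ℚ)+2)*(3*(n:ℚ)+1) * ((3*n).choose n : ℚ) := by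
  have h1 : (n+1) ≤ 3*(n+1) := by omega
  have h2 : n ≤ 3*n := by omega
  rw [Nat.cast_choose ℚ h1, Nat.cast_choose ℚ h2]
  have e1 : 3*(n+1) - (n+1) = 2*n+2 := by omega
  have e2 : 3*n - n = 2*n := by omega
  rw [e1, e2]
  have e3 : 3*(n+1) = ((3*n+1)+1)+1 := by omega
  have e4 : 2*n+2 = (2*n+1)+1 := by omega
  rw [e3, e4]
  rw [Nat.factorial_succ, Nat.factorial_succ, Nat.factorial_succ, Nat.factorial_succ, Nat.factorial_succ, Nat.factorial_succ (2*n)]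
  have f1 : (0:ℚ) < (Nat.factorial n) := by exact_mod_cast Nat.factorial_pos n
  have f2 : (0:ℚ) < (Nat.factorial (2*n)) := by exact_mod_cast Nat.factorial_pos (2*n)
  have f3 : (0:ℚ) < (Nat.factorial (3*n)) := by exact_mod_cast Nat.factorial_pos (3*n)
  push_cast
  field_simp
  ring

theorem stmt_8 (m : ℤ) (hm : m ≠ 0) (n : ℕ) (hn : 1 ≤ n) :
    ∑ k ∈ Finset.Icc 1 n,
      ((m : ℚ) ^ k * (((m : ℚ) - 108) * k ^ 3 - 54 * k ^ 2 + 12 * k + 6)) /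
        ((2 * (k : ℚ) + 1) * (3 * (k : ℚ) + 1) * (k : ℚ) ^ 3 *
          ((2 * k).choose k : ℚ) ^ 2 * ((3 * k).choose k : ℚ))
      = (m : ℚ) ^ (n + 1) /
          ((2 * (n : ℚ) + 1) * (3 * (n : ℚ) + 1) * ((2 * n).choose n : ℚ) ^ 2 *
            ((3 * n).choose n : ℚ)) - (m : ℚ) := by
  induction n with
  | zero => omega
  | succ n ih =>
    rcases Nat.eq_zero_or_pos n with rfl | hn'
    · simp [Finset.sum_Icc_succ_top]
      norm_num
      ring
    · rw [Finset.sum_Icc_succ_top (by omega), ih hn']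
      have hA := chooseA n
      have hB := chooseB n
      set a : ℚ := ((2*n).choose n : ℚ) with ha
      set b : ℚ := ((3*n).choose n : ℚ) with hb
      set A : ℚ := ((2*(n+1)).choose (n+1) : ℚ) with hA'
      set B : ℚ := ((3*(n+1)).choose (n+1) : ℚ) with hB'
      have hapos : (0:ℚ) < a := by rw [ha]; exact_mod_cast Nat.choose_pos (show n ≤ 2*n by omega)
      have hbpos : (0:ℚ) < b := by rw [hb]; exact_mod_cast Nat.choose_pos (show n ≤ 3*n by omega)
      have hn1 : ((n:ℚ)+1) ≠ 0 := by positivity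
      have hAeq : A = 2*(2*n+1)*a/((n:ℚ)+1) := by
        field_simp
        linarith [hA]
      have hBeq : B = 3*(3*(n:ℚ)+2)*(3*(n:ℚ)+1)*b/((2*(n:ℚ)+2)*(2*(n:ℚ)+1)) := by
        rw [eq_div_iff (by positivity)]
        linarith [hB]
      push_cast
      rw [hAeq, hBeq]
      have hm' : (m:ℚ) ≠ 0 := by exact_mod_cast hm
      field_simp
      ring
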